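/- Let p and q be distinct primes. Then the formal power series over ℤ whose j-th coefficient is 1 if j ∈ S_0(p,q) and 0 otherwise satisfies (∑_{j ∈ S_0(p,q)} X^j) · (1 - X) = Φ_{pq}(X), where Φ_{pq} is the pq-th cyclotomic polynomial; equivalently, ∑_{j ∈ S_0(p,q)} X^j = Φ_{pq}(X)/(1 - X) as formal power series. -/

import Mathlib

open scoped Classical in
private lemma coeff_mul_one_sub_X_pow (f : ℕ → ℤ) (c j : ℕ) :
    PowerSeries.coeff j (PowerSeries.mk f * (1 - PowerSeries.X ^ c)) =
      f j - if c ≤ j then f (j - c) else 0 := by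
  rw [mul_sub, mul_one, map_sub, PowerSeries.coeff_mul_X_pow', PowerSeries.coeff_mk]
  simp [PowerSeries.coeff_mk]

open scoped Classical in
private lemma step1 (p q : ℕ) (hp : p.Prime) (hq : q.Prime) (hpq : p ≠ q) (j : ℕ) :
    ((if ∃ m n : ℕ, j = m * p + n * q then (1 : ℤ) else 0) -
      if p ≤ j then (if ∃ m n : ℕ, j - p = m * p + n * q then (1 : ℤ) else 0) else 0) =
    if ∃ n : ℕ, n < p ∧ j = n * q then (1 : ℤ) else 0 := by
  have hcop : Nat.Coprime q p := (Nat.coprime_primes hq hp).mpr (Ne.symm hpq)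
  by_cases hg : ∃ n : ℕ, n < p ∧ j = n * q
  · obtain ⟨n, hn, rfl⟩ := hg
    have h1 : ∃ m n' : ℕ, n * q = m * p + n' * q := ⟨0, n, by ring⟩
    have h3 : ∃ n' : ℕ, n' < p ∧ n * q = n' * q := ⟨n, hn, rfl⟩
    rw [if_pos h1, if_pos h3]
    by_cases hle : p ≤ n * q
    · have h2 : ¬ ∃ m n' : ℕ, n * q - p = m * p + n' * q := by
        rintro ⟨m, n', hrep⟩
        have heq : n * q = m * p + p + n' * q := by omega
        have hn'n : n' ≤ n := by
          have := Nat.le_of_mul_le_mul_right (show n' * q ≤ n * q by omega) hq.pos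
          exact this
        have hdvd : q ∣ (m + 1) * p := ⟨n - n', by rw [Nat.mul_sub, mul_comm q n, mul_comm q n', add_mul, one_mul]; omega⟩
        have hq1 : q ∣ m + 1 := hcop.dvd_of_dvd_mul_right hdvd
        have hq2 : q ≤ m + 1 := Nat.le_of_dvd (by omega) hq1
        nlinarith [hq.pos, hp.pos]
      rw [if_pos hle, if_neg h2]; ring
    · rw [if_neg hle]; ring
  · rw [if_neg hg]
    by_cases hj : ∃ m n : ℕ, j = m * p + n * q
    · rw [if_pos hj]
      obtain ⟨m, n, rfl⟩ := hj
      rcases m with _ | m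
      · have hpn : p ≤ n := by
          by_contra h
          exact hg ⟨n, by omega, by ring⟩
        obtain ⟨k, rfl⟩ : ∃ k, n = p + k := ⟨n - p, by omega⟩
        obtain ⟨q', rfl⟩ : ∃ q', q = q' + 1 := ⟨q - 1, by have := hq.pos; omega⟩
        have hle : p ≤ 0 * p + (p + k) * (q' + 1) := by nlinarith
        have h4 : ∃ m' n' : ℕ, 0 * p + (p + k) * (q' + 1) - p = m' * p + n' * (q' + 1) :=
          ⟨q', k, by rw [Nat.sub_eq_iff_eq_add hle]; ring⟩
        rw [if_pos hle, if_pos h4]; ring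
      · have hle : p ≤ (m + 1) * p + n * q := by nlinarith [hp.pos]
        have h4 : ∃ m' n' : ℕ, (m + 1) * p + n * q - p = m' * p + n' * q :=
          ⟨m, n, by rw [Nat.sub_eq_iff_eq_add hle]; ring⟩
        rw [if_pos hle, if_pos h4]; ring
    · rw [if_neg hj]
      by_cases hle : p ≤ j
      · have h5 : ¬ ∃ m n : ℕ, j - p = m * p + n * q := by
          rintro ⟨m, n, hrep⟩
          exact hj ⟨m + 1, n, by rw [add_mul, one_mul]; omega⟩
        rw [if_pos hle, if_neg h5]; ring
      · rw [if_neg hle]; ring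

open scoped Classical in
private lemma step2 (p q : ℕ) (hp : p.Prime) (hq : q.Prime) (j : ℕ) :
    ((if ∃ n : ℕ, n < p ∧ j = n * q then (1 : ℤ) else 0) -
      if q ≤ j then (if ∃ n : ℕ, n < p ∧ j - q = n * q then (1 : ℤ) else 0) else 0) =
    (if j = 0 then (1 : ℤ) else 0) - (if j = p * q then (1 : ℤ) else 0) := by
  have hq0 := hq.pos
  have hp0 := hp.pos
  rcases eq_or_ne j 0 with rfl | hj0
  · have hpq0 : 0 < p * q := Nat.mul_pos hp0 hq0
    rw [if_pos rfl, if_pos ⟨0, hp0, by ring⟩, if_neg (show ¬ q ≤ 0 by omega), if_neg (show ¬ 0 = p*q by omega)]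
  · rw [if_neg hj0]
    rcases eq_or_ne j (p * q) with rfl | hjpq
    · have h1 : ¬ ∃ n : ℕ, n < p ∧ p * q = n * q := by
        rintro ⟨n, hn, h⟩
        have : n = p := Nat.eq_of_mul_eq_mul_right hq0 (by omega)
        omega
      have hle : q ≤ p * q := Nat.le_mul_of_pos_left q hp0
      have h2 : ∃ n : ℕ, n < p ∧ p * q - q = n * q := by
        refine ⟨p - 1, by omega, ?_⟩
        rw [Nat.sub_mul, one_mul]
      have hpq0 : 0 < p * q := Nat.mul_pos hp0 hq0
      rw [if_neg h1, if_pos hle, if_pos h2, if_pos rfl]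
    · rw [if_neg hjpq]
      by_cases hg : ∃ n : ℕ, n < p ∧ j = n * q
      · obtain ⟨n, hn, rfl⟩ := hg
        have hn0 : n ≠ 0 := by rintro rfl; simp at hj0
        have hle : q ≤ n * q := Nat.le_mul_of_pos_left q (by omega)
        have h2 : ∃ n' : ℕ, n' < p ∧ n * q - q = n' * q := by
          refine ⟨n - 1, by omega, ?_⟩
          rw [Nat.sub_mul, one_mul]
        rw [if_pos ⟨n, hn, rfl⟩, if_pos hle, if_pos h2]; ring
      · rw [if_neg hg]
        by_cases hle : q ≤ j
        · have h2 : ¬ ∃ n : ℕ, n < p ∧ j - q = n * q := by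
            rintro ⟨n, hn, h⟩
            have hj : j = (n + 1) * q := by rw [add_mul, one_mul]; omega
            rcases lt_or_eq_of_le (Nat.succ_le_of_lt hn) with h' | h'
            · exact hg ⟨n + 1, h', hj⟩
            · refine hjpq ?_
              rw [hj, show n + 1 = p from h']
          rw [if_pos hle, if_neg h2]
        · rw [if_neg hle]

private lemma polyid (p q : ℕ) (hp : p.Prime) (hq : q.Prime) (hpq : p ≠ q) :
    (Polynomial.cyclotomic (p * q) ℤ) * ((Polynomial.X ^ p - 1) * (Polynomial.X ^ q - 1)) =
      (Polynomial.X ^ (p * q) - 1) * (Polynomial.X - 1) := by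
  have hd : (p * q).divisors = {1, p, q, p * q} := by
    rw [Nat.divisors_mul, hp.divisors, hq.divisors]
    ext d
    simp [Finset.mem_mul]
    aesop
  have hppos := hp.pos
  have hqpos := hq.pos
  have hp1 := hp.one_lt
  have hq1 := hq.one_lt
  have hpqne : p ≠ p * q := by nlinarith
  have hqne : q ≠ p * q := by nlinarith
  have h1 : (Polynomial.X ^ (p * q) - 1 : Polynomial ℤ) =
      Polynomial.cyclotomic 1 ℤ * (Polynomial.cyclotomic p ℤ *
        (Polynomial.cyclotomic q ℤ * Polynomial.cyclotomic (p * q) ℤ)) := by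
    have m1 : (1:ℕ) ∉ ({p, q, p*q} : Finset ℕ) := by
      simp only [Finset.mem_insert, Finset.mem_singleton]
      push_neg
      refine ⟨by omega, by omega, by nlinarith⟩
    have m2 : p ∉ ({q, p*q} : Finset ℕ) := by
      simp only [Finset.mem_insert, Finset.mem_singleton]
      push_neg
      exact ⟨hpq, hpqne⟩
    have m3 : q ∉ ({p*q} : Finset ℕ) := Finset.notMem_singleton.mpr hqne
    rw [← Polynomial.prod_cyclotomic_eq_X_pow_sub_one (by positivity) ℤ, hd,
      Finset.prod_insert m1, Finset.prod_insert m2,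
      Finset.prod_insert m3, Finset.prod_singleton]
  have h2 : (Polynomial.X ^ p - 1 : Polynomial ℤ) =
      Polynomial.cyclotomic 1 ℤ * Polynomial.cyclotomic p ℤ := by
    rw [← Polynomial.prod_cyclotomic_eq_X_pow_sub_one hppos ℤ, hp.divisors,
      Finset.prod_insert (by simpa using (by omega : ¬ (1:ℕ) = p)), Finset.prod_singleton]
  have h3 : (Polynomial.X ^ q - 1 : Polynomial ℤ) =
      Polynomial.cyclotomic 1 ℤ * Polynomial.cyclotomic q ℤ := by
    rw [← Polynomial.prod_cyclotomic_eq_X_pow_sub_one hqpos ℤ, hq.divisors,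
      Finset.prod_insert (by simpa using (by omega : ¬ (1:ℕ) = q)), Finset.prod_singleton]
  rw [h1, h2, h3, Polynomial.cyclotomic_one]
  ring

open scoped Classical in
/-- For distinct primes `p` and `q`, the generating function of the numerical semigroup
`S₀(p,q) = {m*p + n*q : m, n ∈ ℕ}` satisfies
`(∑_{j ∈ S₀(p,q)} X^j) * (1 - X) = Φ_{pq}(X)`, where `Φ_{pq}` is the `pq`-th cyclotomic
polynomial. -/
theorem genfct_eq_cyclotomic (p q : ℕ) (hp : p.Prime) (hq : q.Prime) (hpq : p ≠ q) :
    (PowerSeries.mk fun j => if ∃ m n : ℕ, j = m * p + n * q then (1 : ℤ) else 0) *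
        (1 - PowerSeries.X) =
      ((Polynomial.cyclotomic (p * q) ℤ : Polynomial ℤ) : PowerSeries ℤ) := by
  set F : PowerSeries ℤ :=
    PowerSeries.mk fun j => if ∃ m n : ℕ, j = m * p + n * q then (1 : ℤ) else 0 with hF
  set G : PowerSeries ℤ :=
    PowerSeries.mk fun j => if ∃ n : ℕ, n < p ∧ j = n * q then (1 : ℤ) else 0 with hG
  have key1 : F * (1 - PowerSeries.X ^ p) = G := by
    ext j
    rw [hF, coeff_mul_one_sub_X_pow, hG, PowerSeries.coeff_mk]
    exact step1 p q hp hq hpq j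
  have key2 : G * (1 - PowerSeries.X ^ q) = 1 - PowerSeries.X ^ (p * q) := by
    ext j
    rw [hG, coeff_mul_one_sub_X_pow, map_sub, PowerSeries.coeff_one, PowerSeries.coeff_X_pow]
    exact step2 p q hp hq j
  have hpoly := polyid p q hp hq hpq
  have hcast := congrArg (fun P : Polynomial ℤ => (P : PowerSeries ℤ)) hpoly
  simp only [Polynomial.coe_mul, Polynomial.coe_sub, Polynomial.coe_pow, Polynomial.coe_X,
    Polynomial.coe_one] at hcast
  have hCne : (1 - PowerSeries.X ^ p) * (1 - PowerSeries.X ^ q) ≠ (0 : PowerSeries ℤ) := by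
    intro h
    have h0 := congrArg (PowerSeries.constantCoeff (R := ℤ)) h
    simp [zero_pow hp.pos.ne', zero_pow hq.pos.ne'] at h0
  apply mul_right_cancel₀ hCne
  calc F * (1 - PowerSeries.X) * ((1 - PowerSeries.X ^ p) * (1 - PowerSeries.X ^ q))
      = F * (1 - PowerSeries.X ^ p) * (1 - PowerSeries.X ^ q) * (1 - PowerSeries.X) := by ring
    _ = (1 - PowerSeries.X ^ (p * q)) * (1 - PowerSeries.X) := by rw [key1, key2]
    _ = ((Polynomial.cyclotomic (p * q) ℤ : Polynomial ℤ) : PowerSeries ℤ) *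
          ((1 - PowerSeries.X ^ p) * (1 - PowerSeries.X ^ q)) := by
        linear_combination -hcast
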